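/- Let T_m be the first hitting time of m for a discrete-time simple random walk from the origin, and T'_m the hitting time for a random walk jumping right with probability p > 1/2. For any positive integers a and b, the conditional distribution of T_b given {T_b < T_{−a}} is stochastically larger than the conditional distribution of T'_b given {T'_b < T'_{−a}}. -/

import Mathlib

open MeasureTheory ProbabilityTheory

namespace Stmt15

/-- A step: `true` is `+1`, `false` is `-1`. -/
def stepZ (s : Bool) : ℤ := if s then 1 else -1

/-- Partial sum of a finite path (extended by 0 beyond `j`). -/
def pathSum (j : ℕ) (v : Fin j → Bool) (k : ℕ) : ℤ :=
  ∑ i ∈ Finset.range k, if h : i < j then stepZ (v ⟨i, h⟩) else 0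

/-- A path of length `j` which first hits `b` at time `j`, avoiding `-a` and `b` before. -/
def isValid (a b j : ℕ) (v : Fin j → Bool) : Prop :=
  pathSum j v j = (b : ℤ) ∧
    ∀ k < j, pathSum j v k ≠ -(a : ℤ) ∧ pathSum j v k ≠ (b : ℤ)

open Classical in
noncomputable def validSet (a b j : ℕ) : Finset (Fin j → Bool) :=
  Finset.univ.filter (isValid a b j)

/-- The weight of a path. -/
def pw (qt qf : ℝ) (j : ℕ) (v : Fin j → Bool) : ℝ :=
  ∏ i, (if v i then qt else qf)

lemma pw_nonneg {qt qf : ℝ} (hqt : 0 ≤ qt) (hqf : 0 ≤ qf) (j : ℕ) (v : Fin j → Bool) :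
    0 ≤ pw qt qf j v :=
  Finset.prod_nonneg fun i _ => by by_cases h : v i <;> simp [h, hqt, hqf]

noncomputable def trueCount (j : ℕ) (v : Fin j → Bool) : ℕ :=
  (Finset.univ.filter (fun i => v i = true)).card

lemma trueCount_le (j : ℕ) (v : Fin j → Bool) : trueCount j v ≤ j := by
  have := Finset.card_filter_le (Finset.univ : Finset (Fin j)) (fun i => v i = true)
  simpa [trueCount] using this

lemma pw_eq (qt qf : ℝ) (j : ℕ) (v : Fin j → Bool) :
    pw qt qf j v = qt ^ trueCount j v * qf ^ (j - trueCount j v) := by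
  classical
  rw [pw, ← Finset.prod_filter_mul_prod_filter_not Finset.univ (fun i => v i = true)]
  have h1 : ∀ i ∈ Finset.univ.filter (fun i : Fin j => v i = true),
      (if v i then qt else qf) = qt := by intro i hi; simp at hi; simp [hi]
  have h2 : ∀ i ∈ Finset.univ.filter (fun i : Fin j => ¬ (v i = true)),
      (if v i then qt else qf) = qf := by
    intro i hi; simp at hi; simp [hi]
  rw [Finset.prod_congr rfl h1, Finset.prod_congr rfl h2, Finset.prod_const,
    Finset.prod_const]
  have hc2 : (Finset.univ.filter (fun i : Fin j => ¬ (v i = true))).card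
      = j - trueCount j v := by
    have h3 := Finset.card_filter_add_card_filter_not
      (s := (Finset.univ : Finset (Fin j))) (p := fun i => v i = true)
    simp only [Finset.card_univ, Fintype.card_fin] at h3
    have ht := trueCount_le j v
    unfold trueCount at *
    omega
  rw [hc2]
  rfl

lemma pw_half (j : ℕ) (v : Fin j → Bool) : pw (1/2) (1/2) j v = (1/2 : ℝ) ^ j := by
  rw [pw_eq, ← pow_add]
  congr 1
  have := trueCount_le j v
  omega

/-- the sum of steps equals `2 * trueCount - j`. -/
lemma pathSum_total (j : ℕ) (v : Fin j → Bool) :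
    pathSum j v j = 2 * (trueCount j v : ℤ) - j := by
  classical
  have hps : pathSum j v j = ∑ i : Fin j, stepZ (v i) := by
    rw [pathSum, ← Fin.sum_univ_eq_sum_range
      (fun i => if h : i < j then stepZ (v ⟨i, h⟩) else 0)]
    exact Finset.sum_congr rfl (fun i _ => by simp [i.isLt])
  rw [hps, ← Finset.sum_filter_add_sum_filter_not Finset.univ (fun i => v i = true)]
  have h1 : ∀ i ∈ Finset.univ.filter (fun i : Fin j => v i = true), stepZ (v i) = 1 := by
    intro i hi; simp at hi; simp [stepZ, hi]
  have h2 : ∀ i ∈ Finset.univ.filter (fun i : Fin j => ¬ (v i = true)), stepZ (v i) = -1 := by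
    intro i hi; simp at hi; simp [stepZ, hi]
  rw [Finset.sum_congr rfl h1, Finset.sum_congr rfl h2, Finset.sum_const, Finset.sum_const]
  have hc1 : (Finset.univ.filter (fun i : Fin j => v i = true)).card = trueCount j v := rfl
  have hc2 : (Finset.univ.filter (fun i : Fin j => ¬ (v i = true))).card
      = j - trueCount j v := by
    have h3 := Finset.card_filter_add_card_filter_not
      (s := (Finset.univ : Finset (Fin j))) (p := fun i => v i = true)
    simp only [Finset.card_univ, Fintype.card_fin] at h3
    have ht := trueCount_le j v
    unfold trueCount at *
    omega
  rw [hc1, hc2]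
  have ht := trueCount_le j v
  simp only [nsmul_eq_mul, mul_one, mul_neg_one]
  push_cast [Nat.cast_sub ht]
  ring

lemma valid_trueCount {a b j : ℕ} {v : Fin j → Bool} (h : isValid a b j v) :
    2 * trueCount j v = j + b := by
  have := pathSum_total j v
  rw [h.1] at this
  omega


end Stmt15
section part2
open Stmt15

variable {p : ℝ}

/-- Per-path likelihood-ratio inequality. -/
lemma path_cross (hp : 1/2 < p) (hp1 : p < 1) {a b j k : ℕ} (hjk : j ≤ k)
    {u : Fin j → Bool} {x : Fin k → Bool} (hu : isValid a b j u) (hx : isValid a b k x) :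
    pw p (1-p) k x * pw (1/2) (1/2) j u ≤ pw p (1-p) j u * pw (1/2) (1/2) k x := by
  have hp0 : (0:ℝ) < p := by linarith
  have hq0 : (0:ℝ) < 1 - p := by linarith
  have htu := valid_trueCount hu
  have htx := valid_trueCount hx
  have htul := trueCount_le j u
  have htxl := trueCount_le k x
  rw [pw_eq p (1-p) k x, pw_eq p (1-p) j u, pw_half, pw_half]
  set tu := trueCount j u with htud
  set tx := trueCount k x with htxd
  have hd : ∃ d : ℕ, tx = tu + d ∧ k = j + 2 * d ∧ k - tx = (j - tu) + d := by
    refine ⟨tx - tu, by omega, by omega, by omega⟩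
  obtain ⟨d, hd1, hd2, hd3⟩ := hd
  rw [hd3, hd1, hd2]
  rw [pow_add, pow_add, pow_add, pow_mul]
  have key : p ^ d * (1-p) ^ d * ((1/2:ℝ))^j ≤ ((1/2:ℝ))^j * (((1/2:ℝ))^2)^d := by
    have h4 : p * (1 - p) ≤ 1/4 := by nlinarith [sq_nonneg (2*p - 1)]
    have : p ^ d * (1-p) ^ d ≤ (((1/2:ℝ))^2)^d := by
      rw [← mul_pow]
      apply pow_le_pow_left₀ (by positivity)
      norm_num
      linarith
    calc p ^ d * (1-p) ^ d * ((1/2:ℝ))^j ≤ (((1/2:ℝ))^2)^d * ((1/2:ℝ))^j := by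
          apply mul_le_mul_of_nonneg_right this (by positivity)
      _ = ((1/2:ℝ))^j * (((1/2:ℝ))^2)^d := by ring
  calc p ^ tu * p ^ d * ((1-p) ^ (j - tu) * (1-p) ^ d) * (1/2:ℝ) ^ j
      = (p ^ tu * (1-p) ^ (j - tu)) * (p ^ d * (1-p) ^ d * ((1/2:ℝ))^j) := by ring
    _ ≤ (p ^ tu * (1-p) ^ (j - tu)) * (((1/2:ℝ))^j * (((1/2:ℝ))^2)^d) := by
        apply mul_le_mul_of_nonneg_left key (by positivity)
    _ = p ^ tu * (1-p) ^ (j - tu) * ((1/2:ℝ)^j * ((1/2:ℝ)^2)^d) := by ring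

/-- The all-`true` path of length `b` is valid. -/
lemma allTrue_valid (a b : ℕ) (ha : 0 < a) (hb : 0 < b) :
    isValid a b b (fun _ => true) := by
  have hps : ∀ k ≤ b, pathSum b (fun _ => true) k = (k : ℤ) := by
    intro k hk
    rw [pathSum]
    have hcg : ∀ i ∈ Finset.range k,
        (if h : i < b then stepZ ((fun _ => true) (⟨i, h⟩ : Fin b)) else 0) = (1 : ℤ) := by
      intro i hi
      have : i < b := lt_of_lt_of_le (Finset.mem_range.mp hi) hk
      simp [this, stepZ]
    rw [Finset.sum_congr rfl hcg, Finset.sum_const]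
    simp
  refine ⟨hps b le_rfl, fun k hk => ⟨?_, ?_⟩⟩
  · rw [hps k hk.le]; omega
  · rw [hps k hk.le]; omega

lemma allTrue_mem (a b : ℕ) (ha : 0 < a) (hb : 0 < b) :
    (fun _ => true) ∈ validSet a b b := by
  classical
  rw [validSet, Finset.mem_filter]
  exact ⟨Finset.mem_univ _, allTrue_valid a b ha hb⟩

lemma pw_allTrue (qt qf : ℝ) (b : ℕ) : pw qt qf b (fun _ => true) = qt ^ b := by
  rw [pw]
  simp

/-- Abstract stochastic-domination inequality for ratio-ordered nonnegative sequences. -/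
lemma cross_div_le (v w : ℕ → ℝ) (hv : ∀ j, 0 ≤ v j) (hw : ∀ j, 0 ≤ w j)
    (hsv : Summable v) (hsw : Summable w)
    (hvpos : 0 < ∑' j, v j) (hwpos : 0 < ∑' j, w j)
    (hcross : ∀ j k, j ≤ k → w k * v j ≤ w j * v k) (m : ℕ) :
    (∑ j ∈ Finset.range (m+1), v j) / (∑' j, v j)
      ≤ (∑ j ∈ Finset.range (m+1), w j) / (∑' j, w j) := by
  rw [div_le_div_iff₀ hvpos hwpos]
  have hvsplit := (Summable.sum_add_tsum_nat_add (m+1) hsv).symm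
  have hwsplit := (Summable.sum_add_tsum_nat_add (m+1) hsw).symm
  set Av := ∑ j ∈ Finset.range (m+1), v j
  set Aw := ∑ j ∈ Finset.range (m+1), w j
  rw [hvsplit, hwsplit, mul_add, mul_add]
  have htail : Av * ∑' k, w (k + (m+1)) ≤ Aw * ∑' k, v (k + (m+1)) := by
    have hsv' : Summable (fun k => v (k + (m+1))) := (summable_nat_add_iff (m+1)).2 hsv
    have hsw' : Summable (fun k => w (k + (m+1))) := (summable_nat_add_iff (m+1)).2 hsw
    rw [← tsum_mul_left, ← tsum_mul_left]
    apply Summable.tsum_le_tsum _ (hsw'.mul_left Av) (hsv'.mul_left Aw)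
    intro k
    -- Av * w (k+m+1) ≤ Aw * v (k+m+1)
    rw [Finset.sum_mul, Finset.sum_mul]
    apply Finset.sum_le_sum
    intro j hj
    have hjm : j ≤ k + (m+1) := by
      have := Finset.mem_range.mp hj; omega
    have := hcross j (k + (m+1)) hjm
    nlinarith [this]
  nlinarith [htail]
end part2
section part3
open Stmt15

variable {Ω : Type*} [MeasurableSpace Ω]

/-- First hitting set at time `j`: sum hits `b` at time `j`, avoiding `-a` and `b` before. -/
def Ej (a b : ℕ) (ξ : ℕ → Ω → ℤ) (j : ℕ) : Set Ω :=
  {ω | (∑ i ∈ Finset.range j, ξ i ω) = (b : ℤ) ∧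
    ∀ k < j, (∑ i ∈ Finset.range k, ξ i ω) ≠ -(a : ℤ) ∧
      (∑ i ∈ Finset.range k, ξ i ω) ≠ (b : ℤ)}

/-- The cylinder set of a path. -/
def Cyl (ξ : ℕ → Ω → ℤ) (j : ℕ) (v : Fin j → Bool) : Set Ω :=
  ⋂ i ∈ Finset.range j, {ω | ξ i ω = if h : i < j then stepZ (v ⟨i, h⟩) else 0}

lemma measurable_sumS {ξ : ℕ → Ω → ℤ} (hm : ∀ i, Measurable (ξ i)) (k : ℕ) :
    Measurable (fun ω => ∑ i ∈ Finset.range k, ξ i ω) :=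
  Finset.measurable_sum _ (fun i _ => hm i)

lemma Ej_measurable {a b : ℕ} {ξ : ℕ → Ω → ℤ} (hm : ∀ i, Measurable (ξ i)) (j : ℕ) :
    MeasurableSet (Ej a b ξ j) := by
  have hS := measurable_sumS hm
  have : Ej a b ξ j = {ω | (∑ i ∈ Finset.range j, ξ i ω) = (b : ℤ)} ∩
      ⋂ k ∈ Set.Iio j, ({ω | (∑ i ∈ Finset.range k, ξ i ω) = -(a : ℤ)}ᶜ ∩
        {ω | (∑ i ∈ Finset.range k, ξ i ω) = (b : ℤ)}ᶜ) := by
    ext ω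
    simp only [Ej, Set.mem_setOf_eq, Set.mem_inter_iff, Set.mem_iInter, Set.mem_Iio,
      Set.mem_compl_iff]
  rw [this]
  exact ((hS j) (measurableSet_singleton _)).inter
    (MeasurableSet.biInter (Set.to_countable _) (fun k _ =>
      (((hS k) (measurableSet_singleton _)).compl).inter
        (((hS k) (measurableSet_singleton _)).compl)))

lemma Ej_disjoint (a b : ℕ) (ξ : ℕ → Ω → ℤ) :
    Pairwise (Function.onFun Disjoint (Ej a b ξ)) := by
  intro j k hjk
  rcases hjk.lt_or_gt with h | h
  · refine Set.disjoint_left.mpr fun ω hj hk => ?_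
    exact (hk.2 j h).2 hj.1
  · refine Set.disjoint_left.mpr fun ω hj hk => ?_
    exact (hj.2 k h).2 hk.1

lemma Cyl_measurable {ξ : ℕ → Ω → ℤ} (hm : ∀ i, Measurable (ξ i)) (j : ℕ)
    (v : Fin j → Bool) : MeasurableSet (Cyl ξ j v) := by
  refine Finset.measurableSet_biInter _ (fun i _ => ?_)
  exact (hm i) (measurableSet_singleton _)

lemma stepZ_inj : Function.Injective stepZ := by
  intro x y h
  cases x <;> cases y <;> simp [stepZ] at h ⊢

lemma Cyl_disjoint (ξ : ℕ → Ω → ℤ) (j : ℕ) {u v : Fin j → Bool} (huv : u ≠ v) :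
    Disjoint (Cyl ξ j u) (Cyl ξ j v) := by
  refine Set.disjoint_left.mpr fun ω hu hv => ?_
  have : ∃ i : Fin j, u i ≠ v i := by
    by_contra h
    push_neg at h
    exact huv (funext h)
  obtain ⟨i, hi⟩ := this
  have hu' := Set.mem_iInter₂.mp hu i (Finset.mem_range.mpr i.isLt)
  have hv' := Set.mem_iInter₂.mp hv i (Finset.mem_range.mpr i.isLt)
  simp only [Set.mem_setOf_eq, i.isLt, dif_pos] at hu' hv'
  rw [Fin.eta] at hu' hv'
  exact hi (stepZ_inj (hu'.symm.trans hv'))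

/-- In a cylinder, the partial sums agree with the path's partial sums. -/
lemma Cyl_sum {ξ : ℕ → Ω → ℤ} {j : ℕ} {v : Fin j → Bool} {ω : Ω} (hω : ω ∈ Cyl ξ j v)
    {k : ℕ} (hk : k ≤ j) :
    (∑ i ∈ Finset.range k, ξ i ω) = pathSum j v k := by
  rw [pathSum]
  refine Finset.sum_congr rfl fun i hi => ?_
  have hij : i < j := lt_of_lt_of_le (Finset.mem_range.mp hi) hk
  have := Set.mem_iInter₂.mp hω i (Finset.mem_range.mpr hij)
  simp only [Set.mem_setOf_eq, hij, dif_pos] at this ⊢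
  exact this

section withMeasure
variable (μ : Measure Ω) [IsProbabilityMeasure μ]
  (qt qf : ℝ) (ξ : ℕ → Ω → ℤ)

/-- Measure of a cylinder, via independence. -/
lemma Cyl_meas (hqt : 0 ≤ qt) (hqf : 0 ≤ qf)
    (hm : ∀ i, Measurable (ξ i))
    (hind : iIndepFun ξ μ)
    (h1 : ∀ i, μ {ω | ξ i ω = 1} = ENNReal.ofReal qt)
    (h2 : ∀ i, μ {ω | ξ i ω = -1} = ENNReal.ofReal qf)
    (j : ℕ) (v : Fin j → Bool) :
    μ (Cyl ξ j v) = ENNReal.ofReal (pw qt qf j v) := by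
  have hs : ∀ i ∈ Finset.range j, MeasurableSet[MeasurableSpace.comap (ξ i) inferInstance]
      {ω | ξ i ω = if h : i < j then stepZ (v ⟨i, h⟩) else 0} := by
    intro i _
    exact ⟨{if h : i < j then stepZ (v ⟨i, h⟩) else 0}, measurableSet_singleton _, by
      ext ω; simp⟩
  rw [Cyl, hind.meas_biInter hs]
  have hterm : ∀ i ∈ Finset.range j,
      μ {ω | ξ i ω = if h : i < j then stepZ (v ⟨i, h⟩) else 0}
        = ENNReal.ofReal (if h : i < j then (if v ⟨i, h⟩ then qt else qf) else 0) := by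
    intro i hi
    have hij : i < j := Finset.mem_range.mp hi
    by_cases hb : v ⟨i, hij⟩
    · simp only [hij, dif_pos, hb, if_true, stepZ]
      exact h1 i
    · simp only [hij, dif_pos, hb, if_false, stepZ]
      exact h2 i
  rw [Finset.prod_congr rfl hterm,
    ← ENNReal.ofReal_prod_of_nonneg (fun i hi => by
      have hij : i < j := Finset.mem_range.mp hi
      by_cases hb : v ⟨i, hij⟩ <;> simp [hij, hb, hqt, hqf])]
  congr 1
  rw [pw, ← Fin.prod_univ_eq_prod_range
    (fun i => if h : i < j then (if v ⟨i, h⟩ then qt else qf) else 0)]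
  exact Finset.prod_congr rfl fun i _ => by simp [i.isLt]

/-- A.s. each step is `±1`. -/
lemma bad_null (hqt : 0 ≤ qt) (hqf : 0 ≤ qf) (hsum : qt + qf = 1)
    (hm : ∀ i, Measurable (ξ i))
    (h1 : ∀ i, μ {ω | ξ i ω = 1} = ENNReal.ofReal qt)
    (h2 : ∀ i, μ {ω | ξ i ω = -1} = ENNReal.ofReal qf) (i : ℕ) :
    μ ({ω | ξ i ω = 1 ∨ ξ i ω = -1}ᶜ) = 0 := by
  have hmeas : MeasurableSet {ω | ξ i ω = 1 ∨ ξ i ω = -1} := by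
    have : {ω | ξ i ω = 1 ∨ ξ i ω = -1}
        = {ω | ξ i ω = 1} ∪ {ω | ξ i ω = -1} := by ext ω; simp [Set.mem_union]
    rw [this]
    exact ((hm i) (measurableSet_singleton _)).union ((hm i) (measurableSet_singleton _))
  have hfull : μ {ω | ξ i ω = 1 ∨ ξ i ω = -1} = 1 := by
    have hdisj : Disjoint {ω | ξ i ω = 1} {ω | ξ i ω = -1} := by
      refine Set.disjoint_left.mpr fun ω hω1 hω2 => ?_
      simp only [Set.mem_setOf_eq] at hω1 hω2
      omega
    have : {ω | ξ i ω = 1 ∨ ξ i ω = -1}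
        = {ω | ξ i ω = 1} ∪ {ω | ξ i ω = -1} := by ext ω; simp [Set.mem_union]
    rw [this, measure_union hdisj ((hm i) (measurableSet_singleton _)), h1, h2,
      ← ENNReal.ofReal_add hqt hqf, hsum]
    simp
  rw [measure_compl hmeas (measure_ne_top μ _), hfull, measure_univ, tsub_self]

/-- The "good" set where all steps up to `j` are `±1`. -/
def GoodSet (ξ : ℕ → Ω → ℤ) (j : ℕ) : Set Ω := {ω | ∀ i < j, ξ i ω = 1 ∨ ξ i ω = -1}

lemma good_conull (hqt : 0 ≤ qt) (hqf : 0 ≤ qf) (hsum : qt + qf = 1)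
    (hm : ∀ i, Measurable (ξ i))
    (h1 : ∀ i, μ {ω | ξ i ω = 1} = ENNReal.ofReal qt)
    (h2 : ∀ i, μ {ω | ξ i ω = -1} = ENNReal.ofReal qf) (j : ℕ) :
    μ ((GoodSet ξ j)ᶜ) = 0 := by
  have hsub : (GoodSet ξ j)ᶜ ⊆ ⋃ i ∈ Finset.range j, {ω | ξ i ω = 1 ∨ ξ i ω = -1}ᶜ := by
    intro ω hω
    simp only [GoodSet, Set.mem_compl_iff, Set.mem_setOf_eq, not_forall] at hω
    obtain ⟨i, hi, hbad⟩ := hω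
    exact Set.mem_biUnion (Finset.mem_range.mpr hi) hbad
  refine measure_mono_null hsub ?_
  refine measure_biUnion_null_iff (Finset.range j).countable_toSet |>.mpr fun i _ => ?_
  exact bad_null μ qt qf ξ hqt hqf hsum hm h1 h2 i

end withMeasure
end part3
section part4
open Stmt15

variable {Ω : Type*} [MeasurableSpace Ω]

lemma mem_validSet {a b j : ℕ} {v : Fin j → Bool} :
    v ∈ validSet a b j ↔ isValid a b j v := by
  classical
  unfold validSet
  constructor
  · intro h; exact (Finset.mem_filter.mp h).2
  · intro h; exact Finset.mem_filter.mpr ⟨Finset.mem_univ _, h⟩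

lemma Ej_inter_good (ξ : ℕ → Ω → ℤ) (a b j : ℕ) :
    Ej a b ξ j ∩ GoodSet ξ j = ⋃ v ∈ validSet a b j, Cyl ξ j v := by
  classical
  ext ω
  constructor
  · rintro ⟨hE, hG⟩
    set v : Fin j → Bool := fun i => decide (ξ i ω = 1) with hv
    have hcyl : ω ∈ Cyl ξ j v := by
      refine Set.mem_iInter₂.mpr fun i hi => ?_
      have hij : i < j := Finset.mem_range.mp hi
      simp only [Set.mem_setOf_eq, hij, dif_pos]
      rcases hG i hij with h1 | h1
      · simp [hv, stepZ, h1]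
      · have : ξ i ω ≠ 1 := by omega
        simp [hv, stepZ, h1, this]
    have hsum : ∀ k ≤ j, (∑ i ∈ Finset.range k, ξ i ω) = pathSum j v k :=
      fun k hk => Cyl_sum hcyl hk
    have hvalid : isValid a b j v := by
      refine ⟨by rw [← hsum j le_rfl]; exact hE.1, fun k hk => ?_⟩
      rw [← hsum k hk.le]
      exact hE.2 k hk
    exact Set.mem_biUnion (mem_validSet.mpr hvalid) hcyl
  · intro hω
    obtain ⟨v, hv, hcyl⟩ := Set.mem_iUnion₂.mp hω
    have hvalid : isValid a b j v := mem_validSet.mp hv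
    have hsum : ∀ k ≤ j, (∑ i ∈ Finset.range k, ξ i ω) = pathSum j v k :=
      fun k hk => Cyl_sum hcyl hk
    constructor
    · exact ⟨by rw [hsum j le_rfl]; exact hvalid.1, fun k hk => by
        rw [hsum k hk.le]; exact hvalid.2 k hk⟩
    · intro i hij
      have := Set.mem_iInter₂.mp hcyl i (Finset.mem_range.mpr hij)
      simp only [Set.mem_setOf_eq, hij, dif_pos] at this
      rw [this]
      cases v ⟨i, hij⟩ <;> simp [stepZ]

variable (μ : Measure Ω) [IsProbabilityMeasure μ] (qt qf : ℝ) (ξ : ℕ → Ω → ℤ)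

lemma Ej_meas (hqt : 0 ≤ qt) (hqf : 0 ≤ qf) (hsum : qt + qf = 1)
    (hm : ∀ i, Measurable (ξ i))
    (hind : iIndepFun ξ μ)
    (h1 : ∀ i, μ {ω | ξ i ω = 1} = ENNReal.ofReal qt)
    (h2 : ∀ i, μ {ω | ξ i ω = -1} = ENNReal.ofReal qf)
    (a b j : ℕ) :
    μ (Ej a b ξ j) = ENNReal.ofReal (∑ v ∈ validSet a b j, pw qt qf j v) := by
  classical
  have hg := good_conull μ qt qf ξ hqt hqf hsum hm h1 h2 j
  rw [← measure_inter_conull hg, Ej_inter_good]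
  rw [measure_biUnion_finset ?hd (fun v _ => Cyl_measurable hm j v)]
  case hd =>
    intro u hu v hv huv
    exact Cyl_disjoint ξ j huv
  rw [Finset.sum_congr rfl (fun v _ => Cyl_meas μ qt qf ξ hqt hqf hm hind h1 h2 j v),
    ← ENNReal.ofReal_sum_of_nonneg (fun v _ => pw_nonneg hqt hqf j v)]

lemma iUnion_Ej (ξ : ℕ → Ω → ℤ) (a b : ℕ) :
    {ω | ∃ j, (∑ i ∈ Finset.range j, ξ i ω) = (b : ℤ)
      ∧ ∀ i < j, (∑ i' ∈ Finset.range i, ξ i' ω) ≠ -(a : ℤ)} = ⋃ j, Ej a b ξ j := by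
  classical
  ext ω
  simp only [Set.mem_setOf_eq, Set.mem_iUnion]
  constructor
  · rintro ⟨j, hj1, hj2⟩
    have hex : ∃ n, (∑ i ∈ Finset.range n, ξ i ω) = (b : ℤ) := ⟨j, hj1⟩
    refine ⟨Nat.find hex, Nat.find_spec hex, fun k hk => ?_⟩
    have hkj : k < j := lt_of_lt_of_le hk (Nat.find_le hj1)
    exact ⟨hj2 k hkj, Nat.find_min hex hk⟩
  · rintro ⟨j, hj1, hj2⟩
    exact ⟨j, hj1, fun k hk => (hj2 k hk).1⟩

lemma biUnion_Ej (ξ : ℕ → Ω → ℤ) (a b m : ℕ) :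
    {ω | ∃ j ≤ m, (∑ i ∈ Finset.range j, ξ i ω) = (b : ℤ)
      ∧ ∀ i < j, (∑ i' ∈ Finset.range i, ξ i' ω) ≠ -(a : ℤ)}
      = ⋃ j ∈ Finset.range (m+1), Ej a b ξ j := by
  classical
  ext ω
  simp only [Set.mem_setOf_eq, Set.mem_iUnion, Finset.mem_range, Finset.mem_coe]
  constructor
  · rintro ⟨j, hjm, hj1, hj2⟩
    have hex : ∃ n, (∑ i ∈ Finset.range n, ξ i ω) = (b : ℤ) := ⟨j, hj1⟩
    have hspec := Nat.find_spec hex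
    have hle : Nat.find hex ≤ j := Nat.find_le hj1
    refine ⟨Nat.find hex, by omega, hspec, fun k hk => ?_⟩
    exact ⟨hj2 k (by omega), Nat.find_min hex hk⟩
  · rintro ⟨j, hjm, hj1, hj2⟩
    exact ⟨j, by omega, hj1, fun k hk => (hj2 k hk).1⟩

/-- Everything we need about one walk. -/
lemma walk_package (hqt : 0 < qt) (hqf : 0 ≤ qf) (hsum : qt + qf = 1)
    (a b : ℕ) (ha : 0 < a) (hb : 0 < b)
    (hm : ∀ i, Measurable (ξ i))
    (hind : iIndepFun ξ μ)
    (h1 : ∀ i, μ {ω | ξ i ω = 1} = ENNReal.ofReal qt)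
    (h2 : ∀ i, μ {ω | ξ i ω = -1} = ENNReal.ofReal qf) :
    (∀ j, (μ (Ej a b ξ j)).toReal = ∑ v ∈ validSet a b j, pw qt qf j v)
    ∧ Summable (fun j => (μ (Ej a b ξ j)).toReal)
    ∧ (μ {ω | ∃ j, (∑ i ∈ Finset.range j, ξ i ω) = (b : ℤ)
        ∧ ∀ i < j, (∑ i' ∈ Finset.range i, ξ i' ω) ≠ -(a : ℤ)}).toReal
        = ∑' j, (μ (Ej a b ξ j)).toReal
    ∧ (∀ m, (μ {ω | ∃ j ≤ m, (∑ i ∈ Finset.range j, ξ i ω) = (b : ℤ)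
        ∧ ∀ i < j, (∑ i' ∈ Finset.range i, ξ i' ω) ≠ -(a : ℤ)}).toReal
        = ∑ j ∈ Finset.range (m+1), (μ (Ej a b ξ j)).toReal)
    ∧ 0 < ∑' j, (μ (Ej a b ξ j)).toReal := by
  classical
  have hpt : ∀ j, (μ (Ej a b ξ j)).toReal = ∑ v ∈ validSet a b j, pw qt qf j v := by
    intro j
    rw [Ej_meas μ qt qf ξ hqt.le hqf hsum hm hind h1 h2 a b j, ENNReal.toReal_ofReal]
    exact Finset.sum_nonneg fun v _ => pw_nonneg hqt.le hqf j v
  have hD : μ {ω | ∃ j, (∑ i ∈ Finset.range j, ξ i ω) = (b : ℤ)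
      ∧ ∀ i < j, (∑ i' ∈ Finset.range i, ξ i' ω) ≠ -(a : ℤ)} = ∑' j, μ (Ej a b ξ j) := by
    rw [iUnion_Ej, measure_iUnion (Ej_disjoint a b ξ) (fun j => Ej_measurable hm j)]
  have hne : ∑' j, μ (Ej a b ξ j) ≠ ⊤ := by
    rw [← hD]; exact measure_ne_top μ _
  have hsummable : Summable (fun j => (μ (Ej a b ξ j)).toReal) :=
    ENNReal.summable_toReal hne
  have hDr : (μ {ω | ∃ j, (∑ i ∈ Finset.range j, ξ i ω) = (b : ℤ)
      ∧ ∀ i < j, (∑ i' ∈ Finset.range i, ξ i' ω) ≠ -(a : ℤ)}).toReal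
      = ∑' j, (μ (Ej a b ξ j)).toReal := by
    rw [hD, ENNReal.tsum_toReal_eq (fun j => measure_ne_top μ _)]
  refine ⟨hpt, hsummable, hDr, fun m => ?_, ?_⟩
  · rw [biUnion_Ej,
      measure_biUnion_finset ((Ej_disjoint a b ξ).set_pairwise _) (fun j _ => Ej_measurable hm j),
      ENNReal.toReal_sum (fun j _ => measure_ne_top μ _)]
  · have hb' : 0 < (μ (Ej a b ξ b)).toReal := by
      rw [hpt b]
      have hmem := allTrue_mem a b ha hb
      have hle := Finset.single_le_sum (f := pw qt qf b)
        (fun v _ => pw_nonneg hqt.le hqf b v) hmem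
      rw [pw_allTrue] at hle
      exact lt_of_lt_of_le (pow_pos hqt b) hle
    have := Summable.le_tsum hsummable b (fun j _ => ENNReal.toReal_nonneg)
    linarith
end part4

open Stmt15 in
/-- Let `T_m` be the first hitting time of `m` for a discrete-time
simple random walk from the origin (steps `ξ`, fair), and `T'_m` the hitting time for a
walk jumping right with probability `p > 1/2` (steps `ξ'`).  For positive integers `a, b`,
the conditional law of `T_b` given `{T_b < T_{−a}}` is stochastically larger than that of
`T'_b` given `{T'_b < T'_{−a}}`; equivalently, for every `m`,
`P(T_b ≤ m | T_b < T_{−a}) ≤ P(T'_b ≤ m | T'_b < T'_{−a})`. -/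
theorem stmt15 {Ω Ω' : Type*} [MeasurableSpace Ω] [MeasurableSpace Ω']
    (μ : Measure Ω) (μ' : Measure Ω') [IsProbabilityMeasure μ] [IsProbabilityMeasure μ']
    (p : ℝ) (hp : 1 / 2 < p) (hp1 : p < 1)
    (a b : ℕ) (ha : 0 < a) (hb : 0 < b)
    (ξ : ℕ → Ω → ℤ) (ξ' : ℕ → Ω' → ℤ)
    (hmξ : ∀ i, Measurable (ξ i)) (hmξ' : ∀ i, Measurable (ξ' i))
    (hind : iIndepFun ξ μ)
    (hind' : iIndepFun ξ' μ')
    (h1 : ∀ i, μ {ω | ξ i ω = 1} = ENNReal.ofReal (1 / 2))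
    (h2 : ∀ i, μ {ω | ξ i ω = -1} = ENNReal.ofReal (1 / 2))
    (h1' : ∀ i, μ' {ω | ξ' i ω = 1} = ENNReal.ofReal p)
    (h2' : ∀ i, μ' {ω | ξ' i ω = -1} = ENNReal.ofReal (1 - p)) :
    ∀ m : ℕ,
      (μ {ω | ∃ j ≤ m, (∑ i ∈ Finset.range j, ξ i ω) = (b : ℤ)
            ∧ ∀ i < j, (∑ i' ∈ Finset.range i, ξ i' ω) ≠ -(a : ℤ)}).toReal /
        (μ {ω | ∃ j, (∑ i ∈ Finset.range j, ξ i ω) = (b : ℤ)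
            ∧ ∀ i < j, (∑ i' ∈ Finset.range i, ξ i' ω) ≠ -(a : ℤ)}).toReal
      ≤ (μ' {ω | ∃ j ≤ m, (∑ i ∈ Finset.range j, ξ' i ω) = (b : ℤ)
            ∧ ∀ i < j, (∑ i' ∈ Finset.range i, ξ' i' ω) ≠ -(a : ℤ)}).toReal /
        (μ' {ω | ∃ j, (∑ i ∈ Finset.range j, ξ' i ω) = (b : ℤ)
            ∧ ∀ i < j, (∑ i' ∈ Finset.range i, ξ' i' ω) ≠ -(a : ℤ)}).toReal := by
  intro m
  obtain ⟨hpt, hsummable, hDr, hDm, hpos⟩ :=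
    walk_package μ (1/2) (1/2) ξ (by norm_num) (by norm_num) (by norm_num)
      a b ha hb hmξ hind h1 h2
  obtain ⟨hpt', hsummable', hDr', hDm', hpos'⟩ :=
    walk_package μ' p (1-p) ξ' (by linarith) (by linarith) (by ring)
      a b ha hb hmξ' hind' h1' h2'
  rw [hDr, hDm m, hDr', hDm' m]
  refine cross_div_le _ _ (fun j => ENNReal.toReal_nonneg) (fun j => ENNReal.toReal_nonneg)
    hsummable hsummable' hpos hpos' ?_ m
  intro j k hjk
  rw [hpt j, hpt k, hpt' j, hpt' k]
  calc (∑ x ∈ validSet a b k, pw p (1-p) k x) * ∑ u ∈ validSet a b j, pw (1/2) (1/2) j u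
      = ∑ x ∈ validSet a b k, ∑ u ∈ validSet a b j,
          pw p (1-p) k x * pw (1/2) (1/2) j u := Finset.sum_mul_sum _ _ _ _
    _ ≤ ∑ x ∈ validSet a b k, ∑ u ∈ validSet a b j,
          pw p (1-p) j u * pw (1/2) (1/2) k x := by
        refine Finset.sum_le_sum fun x hx => Finset.sum_le_sum fun u hu => ?_
        exact path_cross hp hp1 hjk (mem_validSet.mp hu) (mem_validSet.mp hx)
    _ = ∑ u ∈ validSet a b j, ∑ x ∈ validSet a b k,
          pw p (1-p) j u * pw (1/2) (1/2) k x := Finset.sum_comm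
    _ = (∑ u ∈ validSet a b j, pw p (1-p) j u) * ∑ x ∈ validSet a b k, pw (1/2) (1/2) k x :=
        (Finset.sum_mul_sum _ _ _ _).symm
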